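/- arXiv:1004.5230 — 2 statements merged into one kernel-verified Lean document; each statement's English description precedes it below -/
import Mathlib

section
/- For every k ≥ 1, every minimum separating set S of A_k contains an S-universal vertex, i.e., a vertex whose closed neighborhood contains S. -/
open SimpleGraph

/-- The closed ball of radius 1 (closed neighborhood) of `x`. -/
def ball {V : Type*} (G : SimpleGraph V) (x : V) : Set V := {y | y = x ∨ G.Adj x y}

/-- `C` separates every pair of distinct vertices. -/
def IsSeparating {V : Type*} (G : SimpleGraph V) (C : Set V) : Prop :=
  ∀ x y : V, x ≠ y → _root_.ball G x ∩ C ≠ _root_.ball G y ∩ C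

/-- `C` is an identifying code of `G`. -/
def IsIdCode {V : Type*} (G : SimpleGraph V) (C : Set V) : Prop :=
  (∀ x : V, (_root_.ball G x ∩ C).Nonempty) ∧ IsSeparating G C

/-- A graph is twin-free if distinct vertices have distinct closed neighborhoods. -/
def TwinFree {V : Type*} (G : SimpleGraph V) : Prop :=
  ∀ x y : V, _root_.ball G x = _root_.ball G y → x = y

/-- The minimum size of an identifying code. -/
noncomputable def gammaID {V : Type*} (G : SimpleGraph V) : ℕ :=
  sInf {n | ∃ C : Set V, IsIdCode G C ∧ C.ncard = n}

/-- The minimum size of a separating set. -/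
noncomputable def gammaS {V : Type*} (G : SimpleGraph V) : ℕ :=
  sInf {n | ∃ C : Set V, IsSeparating G C ∧ C.ncard = n}

/-- The graph `A_k` on vertices `x_1,…,x_{2k}` (indexed `0,…,2k-1`):
`x_i` adjacent to `x_j` iff `i ≠ j` and `|i - j| ≤ k - 1`. -/
def Agraph (k : ℕ) : SimpleGraph (Fin (2 * k)) where
  Adj i j := i ≠ j ∧ ((i : ℤ) - (j : ℤ)).natAbs ≤ k - 1
  symm := by
    constructor
    intro i j h
    refine ⟨h.1.symm, ?_⟩
    have : ((j : ℤ) - (i : ℤ)).natAbs = ((i : ℤ) - (j : ℤ)).natAbs := by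
      rw [← Int.natAbs_neg]; ring_nf
    omega
  loopless := by constructor; intro i h; exact h.1 rfl

/-- The join of two graphs. -/
def joinG {α β : Type*} (G₁ : SimpleGraph α) (G₂ : SimpleGraph β) : SimpleGraph (α ⊕ β) where
  Adj x y := match x, y with
    | Sum.inl a, Sum.inl b => G₁.Adj a b
    | Sum.inr a, Sum.inr b => G₂.Adj a b
    | _, _ => True
  symm := by constructor; rintro (a | a) (b | b) h <;> first | exact h.symm | trivial
  loopless := by
    constructor
    rintro (a | a) h
    · exact G₁.loopless.irrefl _ h
    · exact G₂.loopless.irrefl _ h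

/-- The star `K_{1,t}`: vertex `0` is the center, adjacent to all other vertices. -/
def starGraph (t : ℕ) : SimpleGraph (Fin (t + 1)) where
  Adj i j := i ≠ j ∧ (i = 0 ∨ j = 0)
  symm := by constructor; rintro i j ⟨h1, h2⟩; exact ⟨h1.symm, h2.symm⟩
  loopless := by constructor; rintro i ⟨h1, _⟩; exact h1 rfl


lemma mem_ball_iff {k : ℕ} (hk : 1 ≤ k) (x y : Fin (2*k)) :
    y ∈ _root_.ball (Agraph k) x ↔ (x:ℕ) ≤ (y:ℕ) + (k-1) ∧ (y:ℕ) ≤ (x:ℕ) + (k-1) := by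
  have hcast : ((x : ℤ) - (y : ℤ)).natAbs = ((x.val : ℤ) - (y.val : ℤ)).natAbs := rfl
  constructor
  · rintro (rfl | ⟨hne, h⟩)
    · omega
    · rw [hcast] at h; omega
  · intro h
    by_cases hxy : y = x
    · exact Or.inl hxy
    · right
      refine ⟨fun e => hxy e.symm, ?_⟩
      rw [hcast]
      have : x.val ≠ y.val := fun e => hxy (Fin.ext e.symm)
      omega

lemma T_sep_wit {k : ℕ} (hk : 1 ≤ k) (x y : Fin (2*k)) (hlt : (x:ℕ) < (y:ℕ)) :
    ∃ z : Fin (2*k), (z:ℕ) ≠ 2*k-1 ∧ ¬(z ∈ _root_.ball (Agraph k) x ↔ z ∈ _root_.ball (Agraph k) y) := by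
  have hx := x.isLt
  have hy := y.isLt
  by_cases hb : (y:ℕ) ≥ k
  · refine ⟨⟨(x:ℕ) - (k-1), by omega⟩, by simp; omega, ?_⟩
    rw [mem_ball_iff hk, mem_ball_iff hk]
    simp only [Fin.val_mk]
    omega
  · refine ⟨⟨(y:ℕ) + (k-1), by omega⟩, by simp; omega, ?_⟩
    rw [mem_ball_iff hk, mem_ball_iff hk]
    simp only [Fin.val_mk]
    omega

lemma T_sep {k : ℕ} (hk : 1 ≤ k) :
    IsSeparating (Agraph k) {i : Fin (2*k) | (i:ℕ) ≠ 2*k-1} := by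
  intro x y hxy heq
  have hvne : (x:ℕ) ≠ (y:ℕ) := fun e => hxy (Fin.ext e)
  rcases Nat.lt_or_ge (x:ℕ) (y:ℕ) with h | h
  · obtain ⟨z, hz1, hz2⟩ := T_sep_wit hk x y h
    have := Set.ext_iff.mp heq z
    simp only [Set.mem_inter_iff, Set.mem_setOf_eq] at this
    tauto
  · obtain ⟨z, hz1, hz2⟩ := T_sep_wit hk y x (by omega)
    have := Set.ext_iff.mp heq z
    simp only [Set.mem_inter_iff, Set.mem_setOf_eq] at this
    tauto

lemma T_card {k : ℕ} (hk : 1 ≤ k) :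
    ({i : Fin (2*k) | (i:ℕ) ≠ 2*k-1} : Set (Fin (2*k))).ncard = 2*k - 1 := by
  have hT : ({i : Fin (2*k) | (i:ℕ) ≠ 2*k-1} : Set (Fin (2*k))) = {(⟨2*k-1, by omega⟩ : Fin (2*k))}ᶜ := by
    ext i; simp [Fin.ext_iff]
  rw [hT]
  have h1 := Set.ncard_add_ncard_compl ({(⟨2*k-1, by omega⟩ : Fin (2*k))} : Set (Fin (2*k)))
  rw [Nat.card_eq_fintype_card, Fintype.card_fin, Set.ncard_singleton] at h1
  omega

theorem stmt8 (k : ℕ) (hk : 1 ≤ k) (S : Set (Fin (2 * k)))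
    (hS : IsSeparating (Agraph k) S)
    (hmin : ∀ S' : Set (Fin (2 * k)), IsSeparating (Agraph k) S' → S.ncard ≤ S'.ncard) :
    ∃ x : Fin (2 * k), S ⊆ ball (Agraph k) x := by
  have hle : S.ncard ≤ 2*k - 1 := by
    have h := hmin _ (T_sep hk)
    rwa [T_card hk] at h
  have hcore : ∀ m : Fin (2*k), 1 ≤ (m:ℕ) → (m:ℕ) ≤ 2*k-2 → m ∈ S := by
    intro m h1 h2
    by_contra hm
    by_cases hc : (m:ℕ) ≤ k-1
    · refine hS ⟨(m:ℕ)+k-1, by omega⟩ ⟨(m:ℕ)+k, by omega⟩ (by simp only [ne_eq, Fin.mk.injEq]; omega) ?_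
      ext z
      have hz := z.isLt
      simp only [Set.mem_inter_iff, mem_ball_iff hk, Fin.val_mk]
      constructor <;> rintro ⟨hb, hzS⟩ <;>
        have hzm : (z:ℕ) ≠ (m:ℕ) := fun e => hm (Fin.ext e ▸ hzS) <;>
        exact ⟨by omega, hzS⟩
    · refine hS ⟨(m:ℕ)-k, by omega⟩ ⟨(m:ℕ)-k+1, by omega⟩ (by simp only [ne_eq, Fin.mk.injEq]; omega) ?_
      ext z
      have hz := z.isLt
      simp only [Set.mem_inter_iff, mem_ball_iff hk, Fin.val_mk]
      constructor <;> rintro ⟨hb, hzS⟩ <;>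
        have hzm : (z:ℕ) ≠ (m:ℕ) := fun e => hm (Fin.ext e ▸ hzS) <;>
        exact ⟨by omega, hzS⟩
  have hnotboth : ¬((⟨0, by omega⟩ : Fin (2*k)) ∈ S ∧ (⟨2*k-1, by omega⟩ : Fin (2*k)) ∈ S) := by
    rintro ⟨h0, hl⟩
    have huniv : S = Set.univ := by
      apply Set.eq_univ_of_forall
      intro i
      have hi := i.isLt
      by_cases hi0 : (i:ℕ) = 0
      · rwa [show i = (⟨0, by omega⟩ : Fin (2*k)) from Fin.ext hi0]
      · by_cases hil : (i:ℕ) = 2*k-1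
        · rwa [show i = (⟨2*k-1, by omega⟩ : Fin (2*k)) from Fin.ext hil]
        · exact hcore i (by omega) (by omega)
    rw [huniv, Set.ncard_univ, Nat.card_eq_fintype_card, Fintype.card_fin] at hle
    omega
  by_cases hlast : (⟨2*k-1, by omega⟩ : Fin (2*k)) ∈ S
  · have h0 : (⟨0, by omega⟩ : Fin (2*k)) ∉ S := fun h => hnotboth ⟨h, hlast⟩
    refine ⟨⟨k, by omega⟩, fun z hz => ?_⟩
    rw [mem_ball_iff hk]
    have hzv := z.isLt
    have hz0 : (z:ℕ) ≠ 0 := fun e =>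
      h0 (by rwa [show (⟨0, by omega⟩ : Fin (2*k)) = z from Fin.ext e.symm])
    simp only [Fin.val_mk]
    omega
  · refine ⟨⟨k-1, by omega⟩, fun z hz => ?_⟩
    rw [mem_ball_iff hk]
    have hzv := z.isLt
    have hzl : (z:ℕ) ≠ 2*k-1 := fun e =>
      hlast (by rwa [show (⟨2*k-1, by omega⟩ : Fin (2*k)) = z from Fin.ext e.symm])
    simp only [Fin.val_mk]
    omega
end

section
/- If G is a twin-free graph (finite or infinite) not containing A_∞^+ as an induced subgraph, then for every vertex x of G there exists a vertex y in the closed neighborhood of x such that G−y is twin-free. -/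
open SimpleGraph

/-- The graph `A_∞^+` on positive indices: `inl i = x_{i+1}`, `inr j = y_{j+1}`;
`X` and `Y` are cliques and `x_i ~ y_j` iff `i < j`. -/
def AinfPlus : SimpleGraph (ℕ ⊕ ℕ) where
  Adj u v := match u, v with
    | Sum.inl i, Sum.inl j => i ≠ j
    | Sum.inr i, Sum.inr j => i ≠ j
    | Sum.inl i, Sum.inr j => i < j
    | Sum.inr j, Sum.inl i => i < j
  symm := ⟨by
    rintro (i | i) (j | j) h
    · exact h.symm
    · exact h
    · exact h
    · exact h.symm⟩
  loopless := ⟨by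
    rintro (i | i) h
    · exact h rfl
    · exact h rfl⟩

section Aux

variable {V : Type*} {G : SimpleGraph V}

lemma ball_comm {u w : V} : w ∈ _root_.ball G u ↔ u ∈ _root_.ball G w := by
  constructor
  · rintro (rfl | h)
    · exact Or.inl rfl
    · exact Or.inr h.symm
  · rintro (rfl | h)
    · exact Or.inl rfl
    · exact Or.inr h.symm

lemma self_mem_ball (u : V) : u ∈ _root_.ball G u := Or.inl rfl

lemma ball_subset_of_eq_insert {a b d : V} (h : _root_.ball G a = insert d (_root_.ball G b)) :
    _root_.ball G b ⊆ _root_.ball G a := by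
  rw [h]; exact Set.subset_insert _ _

/-- Pinning lemma ★ : if `B[β] = B[α] ⊔ {γ}` and `B[u] = B[v] ⊔ {β}` then `u = γ`. -/
lemma starA {β α γ u v : V} (e : _root_.ball G β = insert γ (_root_.ball G α)) (hγ : γ ∉ _root_.ball G α)
    (w : _root_.ball G u = insert β (_root_.ball G v)) (hβv : β ∉ _root_.ball G v) :
    u = γ ∧ _root_.ball G γ = insert β (_root_.ball G v) := by
  have hαβ : α ≠ β := by
    rintro rfl
    exact hγ (by rw [e]; exact Set.mem_insert _ _)
  have hβu : β ∈ _root_.ball G u := by rw [w]; exact Set.mem_insert _ _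
  have huβ : u ∈ _root_.ball G β := ball_comm.mp hβu
  rw [e] at huβ
  rcases huβ with rfl | huα
  · exact ⟨rfl, w⟩
  · exfalso
    have hαu : α ∈ _root_.ball G u := ball_comm.mp huα
    rw [w] at hαu
    rcases hαu with h' | hαv
    · exact hαβ h'
    · have hvα : v ∈ _root_.ball G α := ball_comm.mp hαv
      have hvβ : v ∈ _root_.ball G β := by rw [e]; exact Set.mem_insert_of_mem _ hvα
      exact hβv (ball_comm.mp hvβ)

/-- Pinning lemma ★★ : if `B[β] = B[α] ⊔ {γ}` and `B[u] = B[v] ⊔ {α}` then `v = γ`. -/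
lemma starB {β α γ u v : V} (e : _root_.ball G β = insert γ (_root_.ball G α)) (hγ : γ ∉ _root_.ball G α)
    (w : _root_.ball G u = insert α (_root_.ball G v)) (hαv : α ∉ _root_.ball G v) :
    v = γ := by
  have hαβ : α ≠ β := by
    rintro rfl
    exact hγ (by rw [e]; exact Set.mem_insert _ _)
  have hαu : α ∈ _root_.ball G u := by rw [w]; exact Set.mem_insert _ _
  have huα : u ∈ _root_.ball G α := ball_comm.mp hαu
  have huβ : u ∈ _root_.ball G β := by rw [e]; exact Set.mem_insert_of_mem _ huα
  have hβu : β ∈ _root_.ball G u := ball_comm.mp huβ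
  rw [w] at hβu
  rcases hβu with h' | hβv
  · exact absurd h' hαβ.symm
  · have hvβ : v ∈ _root_.ball G β := ball_comm.mp hβv
    rw [e] at hvβ
    rcases hvβ with rfl | hvα
    · exact rfl
    · exact absurd (ball_comm.mp hvα) hαv

/-- State of the chain construction: `(a,b,c,d) = (Xₙ, Xₙ₊₁, Yₙ, Yₙ₊₁)`. -/
structure CS (G : SimpleGraph V) (x : V) where
  a : V
  b : V
  c : V
  d : V
  i1 : _root_.ball G a = insert d (_root_.ball G b)
  i2 : d ∉ _root_.ball G b
  i3 : _root_.ball G d = insert a (_root_.ball G c)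
  i4 : a ∉ _root_.ball G c
  i6 : _root_.ball G a ⊆ _root_.ball G x

variable {x : V} (u v : ∀ z, z ∈ _root_.ball G x → V)
  (h1 : ∀ z hz, z ∉ _root_.ball G (v z hz))
  (h2 : ∀ z hz, _root_.ball G (u z hz) = insert z (_root_.ball G (v z hz)))

/-- One step of the chain construction. -/
def csStep (s : CS G x) : {t : CS G x // t.a = s.b ∧ t.c = s.d} := by
  have hbmem : s.b ∈ _root_.ball G x := s.i6 (ball_subset_of_eq_insert s.i1 (self_mem_ball s.b))
  have hveq : v s.b hbmem = s.d := starB s.i1 s.i2 (h2 s.b hbmem) (h1 s.b hbmem)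
  have e2 : _root_.ball G (u s.b hbmem) = insert s.b (_root_.ball G s.d) := by
    have := h2 s.b hbmem; rwa [hveq] at this
  have hbd : s.b ∉ _root_.ball G s.d := fun hh => s.i2 (ball_comm.mp hh)
  have hUmem : u s.b hbmem ∈ _root_.ball G x := by
    have : u s.b hbmem ∈ _root_.ball G s.b := ball_comm.mp (by rw [e2]; exact Set.mem_insert _ _)
    exact s.i6 (ball_subset_of_eq_insert s.i1 this)
  have hstar := starA e2 hbd (h2 _ hUmem) (h1 _ hUmem)
  exact ⟨{ a := s.b
           b := v _ hUmem
           c := s.d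
           d := u s.b hbmem
           i1 := hstar.2
           i2 := h1 _ hUmem
           i3 := e2
           i4 := hbd
           i6 := fun w hw => s.i6 (ball_subset_of_eq_insert s.i1 hw) }, rfl, rfl⟩

/-- The base state of the chain construction. -/
def csBase : CS G x := by
  have hx : x ∈ _root_.ball G x := self_mem_ball x
  have hpmem : u x hx ∈ _root_.ball G x :=
    ball_comm.mp (by rw [h2 x hx]; exact Set.mem_insert _ _)
  have hstar := starA (h2 x hx) (h1 x hx) (h2 _ hpmem) (h1 _ hpmem)
  exact { a := x
          b := v _ hpmem
          c := v x hx
          d := u x hx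
          i1 := hstar.2
          i2 := h1 _ hpmem
          i3 := h2 x hx
          i4 := h1 x hx
          i6 := le_refl _ }

/-- The full chain. -/
def csChain : ℕ → CS G x :=
  fun n => Nat.rec (csBase u v h1 h2) (fun _ s => (csStep u v h1 h2 s).1) n

lemma csChain_a (n : ℕ) :
    (csChain u v h1 h2 (n + 1)).a = (csChain u v h1 h2 n).b :=
  (csStep u v h1 h2 (csChain u v h1 h2 n)).2.1

lemma csChain_c (n : ℕ) :
    (csChain u v h1 h2 (n + 1)).c = (csChain u v h1 h2 n).d :=
  (csStep u v h1 h2 (csChain u v h1 h2 n)).2.2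

end Aux

theorem stmt16 {V : Type*} (G : SimpleGraph V) (hTF : TwinFree G)
    (hnoA : ¬ Nonempty (AinfPlus ↪g G)) :
    ∀ x : V, ∃ y ∈ _root_.ball G x, TwinFree (G.induce ({y}ᶜ : Set V)) := by
  intro x
  by_contra hc
  push_neg at hc
  -- every vertex of `_root_.ball G x` is "forced"
  have H : ∀ z ∈ _root_.ball G x, ∃ u' v' : V, z ∉ _root_.ball G v' ∧ _root_.ball G u' = insert z (_root_.ball G v') := by
    intro z hz
    have h := hc z hz
    unfold TwinFree at h
    push_neg at h
    obtain ⟨a, b, hab, hne⟩ := h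
    have key : ∀ w : V, w ≠ z → (w ∈ _root_.ball G (a : V) ↔ w ∈ _root_.ball G (b : V)) := by
      intro w hw
      have hws : w ∈ ({z}ᶜ : Set V) := hw
      have h' := Set.ext_iff.mp hab ⟨w, hws⟩
      simp only [_root_.ball, Set.mem_setOf_eq, Subtype.ext_iff] at h'
      exact h'
    have hball_ne : _root_.ball G (a : V) ≠ _root_.ball G (b : V) := fun e =>
      hne (Subtype.ext (hTF _ _ e))
    by_cases hza : z ∈ _root_.ball G (a : V) <;> by_cases hzb : z ∈ _root_.ball G (b : V)
    · exact absurd (Set.ext fun w => by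
        by_cases hw : w = z
        · subst hw; simp [hza, hzb]
        · exact key w hw) hball_ne
    · refine ⟨a, b, hzb, Set.ext fun w => ?_⟩
      by_cases hw : w = z
      · subst hw; simp [hza]
      · rw [key w hw]
        simp [Set.mem_insert_iff, hw]
    · refine ⟨b, a, hza, Set.ext fun w => ?_⟩
      by_cases hw : w = z
      · subst hw; simp [hzb]
      · rw [← key w hw]
        simp [Set.mem_insert_iff, hw]
    · exact absurd (Set.ext fun w => by
        by_cases hw : w = z
        · subst hw; simp [hza, hzb]
        · exact key w hw) hball_ne
  choose u v h1 h2 using H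
  -- the chain
  set C : ℕ → CS G x := csChain u v h1 h2 with hC
  set X : ℕ → V := fun n => (C n).a with hX
  set Y : ℕ → V := fun n => (C n).c with hY
  have hCa : ∀ n, (C (n+1)).a = (C n).b := fun n => csChain_a u v h1 h2 n
  have hCc : ∀ n, (C (n+1)).c = (C n).d := fun n => csChain_c u v h1 h2 n
  have I1 : ∀ n, _root_.ball G (X n) = insert (Y (n+1)) (_root_.ball G (X (n+1))) := by
    intro n
    have h := (C n).i1
    rw [← hCa n, ← hCc n] at h
    exact h
  have I2 : ∀ n, Y (n+1) ∉ _root_.ball G (X (n+1)) := by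
    intro n
    have h := (C n).i2
    rw [← hCa n, ← hCc n] at h
    exact h
  have I3 : ∀ n, _root_.ball G (Y (n+1)) = insert (X n) (_root_.ball G (Y n)) := by
    intro n
    have h := (C n).i3
    rw [← hCc n] at h
    exact h
  have I4 : ∀ n, X n ∉ _root_.ball G (Y n) := fun n => (C n).i4
  -- monotonicity
  have hXle : ∀ m n : ℕ, m ≤ n → _root_.ball G (X n) ⊆ _root_.ball G (X m) := by
    intro m n hmn
    induction n, hmn using Nat.le_induction with
    | base => exact le_refl _
    | succ n hmn ih => exact (ball_subset_of_eq_insert (I1 n)).trans ih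
  have hYle : ∀ m n : ℕ, m ≤ n → _root_.ball G (Y m) ⊆ _root_.ball G (Y n) := by
    intro m n hmn
    induction n, hmn using Nat.le_induction with
    | base => exact le_refl _
    | succ n hmn ih => exact ih.trans (ball_subset_of_eq_insert (I3 n))
  -- key membership facts
  have memYX : ∀ j, Y j ∉ _root_.ball G (X j) := by
    intro j
    cases j with
    | zero => exact fun h => I4 0 (ball_comm.mp h)
    | succ k => exact I2 k
  have YnotinX : ∀ i j, j ≤ i → Y j ∉ _root_.ball G (X i) :=
    fun i j hji h => memYX j (hXle j i hji h)
  have XnotinY : ∀ i j, j ≤ i → X i ∉ _root_.ball G (Y j) :=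
    fun i j hji h => I4 i (hYle j i hji h)
  have XinY : ∀ i j, i < j → X i ∈ _root_.ball G (Y j) := by
    intro i j hij
    refine hYle (i+1) j hij ?_
    rw [I3 i]; exact Set.mem_insert _ _
  have YinX : ∀ i j, i < j → Y j ∈ _root_.ball G (X i) :=
    fun i j hij => ball_comm.mp (XinY i j hij)
  have XinX : ∀ i j : ℕ, X j ∈ _root_.ball G (X i) := by
    intro i j
    rcases le_total i j with h | h
    · exact hXle i j h (self_mem_ball _)
    · exact ball_comm.mp (hXle j i h (self_mem_ball _))
  have YinY : ∀ i j : ℕ, Y j ∈ _root_.ball G (Y i) := by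
    intro i j
    rcases le_total i j with h | h
    · exact ball_comm.mp (hYle i j h (self_mem_ball _))
    · exact hYle j i h (self_mem_ball _)
  -- distinctness
  have hXne : ∀ i j, i < j → X i ≠ X j := by
    intro i j hij e
    exact YnotinX j (i+1) hij (e ▸ YinX i (i+1) (Nat.lt_succ_self i))
  have hYne : ∀ i j, i < j → Y i ≠ Y j := by
    intro i j hij e
    exact XnotinY i i le_rfl (by rw [e]; exact XinY i j hij)
  have hXYne : ∀ i j, X i ≠ Y j := by
    intro i j e
    rcases le_or_gt j i with h | h
    · exact XnotinY i j h (by rw [e]; exact self_mem_ball (Y j))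
    · exact memYX j (by rw [← e]; exact XinX j i)
  -- adjacency
  have adjXX : ∀ i j, i ≠ j → G.Adj (X i) (X j) := by
    intro i j hij
    rcases (XinX i j) with h | h
    · exact absurd h.symm (by rcases hij.lt_or_gt with h' | h'
                              · exact hXne i j h'
                              · exact (hXne j i h').symm)
    · exact h
  have adjYY : ∀ i j, i ≠ j → G.Adj (Y i) (Y j) := by
    intro i j hij
    rcases (YinY i j) with h | h
    · exact absurd h.symm (by rcases hij.lt_or_gt with h' | h'
                              · exact hYne i j h'
                              · exact (hYne j i h').symm)
    · exact h
  have adjXY : ∀ i j, i < j → G.Adj (X i) (Y j) := by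
    intro i j hij
    rcases YinX i j hij with h | h
    · exact absurd h.symm (hXYne i j)
    · exact h
  have nadjXY : ∀ i j, j ≤ i → ¬ G.Adj (X i) (Y j) := by
    intro i j hji h
    exact YnotinX i j hji (Or.inr h)
  -- build the embedding
  refine hnoA ⟨⟨⟨Sum.elim X Y, ?_⟩, ?_⟩⟩
  · rintro (i | i) (j | j) h
    · simp only [Sum.elim_inl] at h
      rcases lt_trichotomy i j with h' | h' | h'
      · exact absurd h (hXne i j h')
      · exact congrArg Sum.inl h'
      · exact absurd h.symm (hXne j i h')
    · exact absurd h (hXYne i j)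
    · exact absurd h.symm (hXYne j i)
    · simp only [Sum.elim_inr] at h
      rcases lt_trichotomy i j with h' | h' | h'
      · exact absurd h (hYne i j h')
      · exact congrArg Sum.inr h'
      · exact absurd h.symm (hYne j i h')
  · rintro (i | i) (j | j)
    · show G.Adj (X i) (X j) ↔ i ≠ j
      constructor
      · rintro h rfl; exact G.loopless.irrefl _ h
      · exact adjXX i j
    · show G.Adj (X i) (Y j) ↔ i < j
      constructor
      · intro h
        by_contra h'
        exact nadjXY i j (Nat.le_of_not_lt h') h
      · exact adjXY i j
    · show G.Adj (Y i) (X j) ↔ j < i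
      constructor
      · intro h
        by_contra h'
        exact nadjXY j i (Nat.le_of_not_lt h') h.symm
      · exact fun h' => (adjXY j i h').symm
    · show G.Adj (Y i) (Y j) ↔ i ≠ j
      constructor
      · rintro h rfl; exact G.loopless.irrefl _ h
      · exact adjYY i j
end
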